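/- Let T ≥ h ≥ 1 be integers with T_h := T − h ≥ 1 and let ρ ∈ ℝ, σ > 0 (with the convention 0^0 = 1). Let u_0, u_1, …, u_T be square-integrable real random variables with E[u_a] = 0 for all a and E[u_a u_b] = σ² · 1{a = b} for all a, b. Let (m_t)_{t=0}^{T_h} be real numbers and define x_t := m_t + Σ_{ℓ=0}^{t} ρ^ℓ u_{t−ℓ} and x̄ := T_h^{−1} Σ_{t=1}^{T_h} x_t. Then for every integer s with 0 ≤ s ≤ h − 1, Σ_{t=1}^{T_h} E[ x̄ · u_{t+h−s} ] = (σ² / T_h) Σ_{t=h−s}^{T_h} (T_h − t) ρ^{t−(h−s)}. -/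

import Mathlib

open MeasureTheory

lemma tri_sum (N : ℕ) (f : ℕ → ℝ) :
    ∑ i ∈ Finset.range N, ∑ j ∈ Finset.range (N - i), f j
      = ∑ j ∈ Finset.range N, ((N - j : ℕ) : ℝ) * f j := by
  have h1 : ∀ k : ℕ, (Finset.range N).filter (fun j => k + j < N) = Finset.range (N - k) := by
    intro k; ext j; simp [Finset.mem_filter]; omega
  have h2 : ∀ i : ℕ, ∑ j ∈ Finset.range (N - i), f j
      = ∑ j ∈ Finset.range N, if i + j < N then f j else 0 := by
    intro i; rw [← Finset.sum_filter, h1]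
  simp_rw [h2]
  rw [Finset.sum_comm]
  refine Finset.sum_congr rfl fun j hj => ?_
  have : ∀ i : ℕ, (if i + j < N then f j else 0) = if j + i < N then f j else 0 := by
    intro i; rw [Nat.add_comm]
  simp_rw [this]
  rw [← Finset.sum_filter, h1, Finset.sum_const, nsmul_eq_mul]
  simp

/-- Covariance between the time average of the MA-representation regressor
`x_t = m_t + Σ_{ℓ=0}^{t} ρ^ℓ u_{t−ℓ}` and future innovations:
`Σ_{t=1}^{T_h} E[x̄ u_{t+h−s}] = (σ²/T_h) Σ_{t=h−s}^{T_h} (T_h − t) ρ^{t−(h−s)}`. -/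
theorem xbar_future_innovation_covariance
    {Ω : Type*} [m0 : MeasurableSpace Ω] (μ : Measure Ω) [IsProbabilityMeasure μ]
    (T h : ℕ) (hh : 1 ≤ h) (hhT : h ≤ T) (hTh : 1 ≤ T - h)
    (ρ σ : ℝ) (hσ : 0 < σ)
    (u : ℕ → Ω → ℝ)
    (huL2 : ∀ a ∈ Finset.range (T + 1), MemLp (u a) 2 μ)
    (humean : ∀ a ∈ Finset.range (T + 1), ∫ ω, u a ω ∂μ = 0)
    (hucov : ∀ a ∈ Finset.range (T + 1), ∀ b ∈ Finset.range (T + 1),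
      ∫ ω, u a ω * u b ω ∂μ = if a = b then σ ^ 2 else 0)
    (m : ℕ → ℝ) (x : ℕ → Ω → ℝ)
    (hx : ∀ t, x t = fun ω => m t + ∑ ℓ ∈ Finset.range (t + 1), ρ ^ ℓ * u (t - ℓ) ω)
    (xbar : Ω → ℝ)
    (hxbar : xbar = fun ω => ((T - h : ℕ) : ℝ)⁻¹ * ∑ t ∈ Finset.Icc 1 (T - h), x t ω)
    (s : ℕ) (hs : s ≤ h - 1) :
    ∑ t ∈ Finset.Icc 1 (T - h), ∫ ω, xbar ω * u (t + h - s) ω ∂μ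
      = σ ^ 2 / ((T - h : ℕ) : ℝ)
        * ∑ t ∈ Finset.Icc (h - s) (T - h), (((T - h : ℕ) : ℝ) - (t : ℝ)) * ρ ^ (t - (h - s)) := by
  set Th := T - h with hThdef
  set d := h - s with hddef
  have hd1 : 1 ≤ d := by omega
  have hTT : Th ≤ T := by omega
  -- basic integrability facts
  have huInt : ∀ a, a ≤ T → Integrable (u a) μ := fun a ha =>
    (huL2 a (by simp; omega)).integrable one_le_two
  have hmul : ∀ a b, a ≤ T → b ≤ T → Integrable (fun ω => u a ω * u b ω) μ := by
    intro a b ha hb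
    have h1 : MemLp (u a • u b) 1 μ :=
      (huL2 b (by simp; omega)).smul (huL2 a (by simp; omega))
        (hpqr := ⟨by rw [ENNReal.inv_two_add_inv_two]; simp⟩)
    exact h1.integrable le_rfl
  have hxInt : ∀ r a, r ≤ T → a ≤ T → Integrable (fun ω => x r ω * u a ω) μ := by
    intro r a hr ha
    rw [hx]
    simp only [add_mul, Finset.sum_mul]
    apply Integrable.add
    · exact (huInt a ha).const_mul (m r)
    · apply integrable_finset_sum
      intro ℓ hℓ
      simp_rw [mul_assoc]
      exact (hmul (r - ℓ) a (by omega) ha).const_mul _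
  -- key integral computation
  have key : ∀ r, r ≤ T → ∀ a, 1 ≤ a → a ≤ T →
      ∫ ω, x r ω * u a ω ∂μ = if a ≤ r then σ ^ 2 * ρ ^ (r - a) else 0 := by
    intro r hr a ha1 ha2
    rw [hx]
    simp only [add_mul, Finset.sum_mul]
    rw [integral_add ((huInt a ha2).const_mul (m r))
      (integrable_finset_sum _ (fun ℓ hℓ => by
        simp_rw [mul_assoc]
        exact (hmul (r - ℓ) a (by omega) ha2).const_mul _))]
    rw [integral_const_mul, humean a (by simp; omega), mul_zero, zero_add]
    rw [integral_finset_sum _ (fun ℓ hℓ => by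
      simp_rw [mul_assoc]
      exact (hmul (r - ℓ) a (by omega) ha2).const_mul _)]
    have step : ∀ ℓ ∈ Finset.range (r + 1),
        ∫ ω, ρ ^ ℓ * u (r - ℓ) ω * u a ω ∂μ
          = ρ ^ ℓ * (if r - ℓ = a then σ ^ 2 else 0) := by
      intro ℓ hℓ
      simp_rw [mul_assoc]
      rw [integral_const_mul, hucov (r - ℓ) (by simp; omega) a (by simp; omega)]
    rw [Finset.sum_congr rfl step]
    by_cases hle : a ≤ r
    · rw [if_pos hle]
      have step2 : ∀ ℓ ∈ Finset.range (r + 1),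
          ρ ^ ℓ * (if r - ℓ = a then σ ^ 2 else 0)
            = if ℓ = r - a then ρ ^ ℓ * σ ^ 2 else 0 := by
        intro ℓ hℓ
        simp only [Finset.mem_range] at hℓ
        rw [mul_ite, mul_zero, if_congr (by omega : (r - ℓ = a) ↔ (ℓ = r - a)) rfl rfl]
      rw [Finset.sum_congr rfl step2, Finset.sum_ite_eq' (Finset.range (r + 1)) (r - a)
        (fun ℓ => ρ ^ ℓ * σ ^ 2), if_pos (by simp)]
      ring
    · rw [if_neg hle]
      apply Finset.sum_eq_zero
      intro ℓ hℓ
      simp only [Finset.mem_range] at hℓ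
      rw [if_neg (by omega), mul_zero]
  -- the average
  have hbar : ∀ a, 1 ≤ a → a ≤ T →
      ∫ ω, xbar ω * u a ω ∂μ
        = ((Th : ℕ) : ℝ)⁻¹ * ∑ r ∈ Finset.Icc 1 Th, ∫ ω, x r ω * u a ω ∂μ := by
    intro a ha1 ha2
    rw [hxbar]
    have hpt : ∀ ω, (((Th : ℕ) : ℝ)⁻¹ * ∑ t ∈ Finset.Icc 1 Th, x t ω) * u a ω
        = ((Th : ℕ) : ℝ)⁻¹ * ∑ t ∈ Finset.Icc 1 Th, x t ω * u a ω := by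
      intro ω; rw [mul_assoc, Finset.sum_mul]
    simp_rw [hpt]
    rw [integral_const_mul, integral_finset_sum _ (fun r hr =>
      hxInt r a (le_trans (Finset.mem_Icc.mp hr).2 hTT) ha2)]
  -- rewrite the LHS
  have hLHS : ∑ t ∈ Finset.Icc 1 Th, ∫ ω, xbar ω * u (t + h - s) ω ∂μ
      = ((Th : ℕ) : ℝ)⁻¹ * ∑ t ∈ Finset.Icc 1 Th, ∑ r ∈ Finset.Icc 1 Th,
          (if t + d ≤ r then σ ^ 2 * ρ ^ (r - (t + d)) else 0) := by
    rw [Finset.mul_sum]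
    refine Finset.sum_congr rfl fun t ht => ?_
    obtain ⟨ht1, ht2⟩ := Finset.mem_Icc.mp ht
    have hts : t + h - s = t + d := by omega
    rw [hts, hbar (t + d) (by omega) (by omega)]
    congr 1
    refine Finset.sum_congr rfl fun r hr => ?_
    obtain ⟨hr1, hr2⟩ := Finset.mem_Icc.mp hr
    exact key r (by omega) (t + d) (by omega) (by omega)
  rw [hLHS]
  -- now pure algebra
  have halg : ∑ t ∈ Finset.Icc 1 Th, ∑ r ∈ Finset.Icc 1 Th,
        (if t + d ≤ r then σ ^ 2 * ρ ^ (r - (t + d)) else 0)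
      = σ ^ 2 * ∑ t ∈ Finset.Icc d Th, (((Th : ℕ) : ℝ) - (t : ℝ)) * ρ ^ (t - d) := by
    have inner : ∀ t, 1 ≤ t →
        ∑ r ∈ Finset.Icc 1 Th, (if t + d ≤ r then σ ^ 2 * ρ ^ (r - (t + d)) else 0)
          = ∑ j ∈ Finset.range (Th - d - (t - 1)), σ ^ 2 * ρ ^ j := by
      intro t ht
      have hfil : (Finset.Icc 1 Th).filter (fun r => t + d ≤ r) = Finset.Icc (t + d) Th := by
        ext r; simp [Finset.mem_filter, Finset.mem_Icc]; omega
      rw [← Finset.sum_filter, hfil, ← Finset.Ico_add_one_right_eq_Icc, Finset.sum_Ico_eq_sum_range]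
      have hn : Th + 1 - (t + d) = Th - d - (t - 1) := by omega
      rw [hn]
      refine Finset.sum_congr rfl fun j hj => ?_
      have hexp : t + d + j - (t + d) = j := by omega
      rw [hexp]
    -- rewrite outer sum over Icc 1 Th as range
    rw [Finset.sum_congr rfl (fun t ht => inner t (Finset.mem_Icc.mp ht).1)]
    rw [← Finset.Ico_add_one_right_eq_Icc, Finset.sum_Ico_eq_sum_range]
    have hn2 : ∀ i, Th - d - (1 + i - 1) = (Th - d) - i := by intro i; omega
    simp_rw [hn2]
    have hcut : ∑ i ∈ Finset.range (Th + 1 - 1), ∑ j ∈ Finset.range (Th - d - i), σ ^ 2 * ρ ^ j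
        = ∑ i ∈ Finset.range (Th - d), ∑ j ∈ Finset.range (Th - d - i), σ ^ 2 * ρ ^ j := by
      rw [← Finset.sum_subset (Finset.range_subset_range.mpr (by omega : Th - d ≤ Th + 1 - 1))]
      intro i hi hni
      simp only [Finset.mem_range] at hi hni
      have : Th - d - i = 0 := by omega
      rw [this, Finset.range_zero, Finset.sum_empty]
    rw [hcut, tri_sum]
    -- RHS side
    rw [← Finset.Ico_add_one_right_eq_Icc, Finset.sum_Ico_eq_sum_range, Finset.mul_sum]
    by_cases hdT : d ≤ Th
    · have hn3 : Th + 1 - d = (Th - d) + 1 := by omega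
      rw [hn3, Finset.sum_range_succ]
      have hlast : (((Th : ℕ) : ℝ) - ((d + (Th - d) : ℕ) : ℝ)) * ρ ^ (d + (Th - d) - d) = 0 := by
        have : (d + (Th - d) : ℕ) = Th := by omega
        rw [this, sub_self, zero_mul]
      rw [hlast, mul_zero, add_zero]
      refine Finset.sum_congr rfl fun j hj => ?_
      simp only [Finset.mem_range] at hj
      have hc : ((Th - d - j : ℕ) : ℝ) = ((Th : ℕ) : ℝ) - ((d + j : ℕ) : ℝ) := by
        push_cast [Nat.cast_sub (by omega : j ≤ Th - d), Nat.cast_sub (by omega : d ≤ Th)]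
        ring
      have he : d + j - d = j := by omega
      rw [hc, he]
      ring
    · have h1 : Th - d = 0 := by omega
      have h2 : Th + 1 - d = 0 := by omega
      rw [h1, h2, Finset.range_zero, Finset.sum_empty, Finset.sum_empty]
  rw [halg, div_eq_mul_inv]
  ring
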